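/- Let α ≥ 1, β ≥ 1 with αβ > 1, λ = μ = 2, ν < 1, ξ ∈ ℝ with 1 - ξ + β(1 - ν) > 0. Define by induction v₀(r) = 1 and, for k ≥ 1, u_k(r) = (1/(N-2)) ∫_ρ^r s · L₁ s^(-2) (ln s)^(-ν) [1 - (s/r)^(N-2)] v_{k-1}(s)^α ds and v_k(r) = (1/(N-2)) ∫_ρ^r s · L₂ s^(-2) (ln s)^(-ξ) [1 - (s/r)^(N-2)] u_{k-1}(s)^β ds, with u₀ = 1, where N ≥ 3, ρ > 1, L₁, L₂ > 0. Then for every k ≥ 0 there exist C_k > 0 and r_k > ρ such that v_{2k}(r) ≥ C_k (ln r)^(((α^k β^k - 1)(1 - ξ + β(1-ν)))/(αβ - 1)) for all r > r_k. -/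

import Mathlib

open Set MeasureTheory Filter

private lemma aux_contOn_primitive {ρ : ℝ} {G : ℝ → ℝ}
    (hG : ContinuousOn G (Set.Ici ρ)) :
    ContinuousOn (fun x => ∫ s in ρ..x, G s) (Set.Ici ρ) := by
  intro b hb
  have hb1 : ρ ≤ b := hb
  have hint : IntegrableOn G (Set.Icc ρ (b+1)) := by
    refine (hG.mono ?_).integrableOn_compact isCompact_Icc
    exact fun x hx => hx.1
  have huIcc : Set.uIcc ρ (b+1) = Set.Icc ρ (b+1) := Set.uIcc_of_le (by linarith)
  have h := intervalIntegral.continuousOn_primitive_interval (μ := volume)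
    (a := ρ) (b := b+1) (by rw [huIcc]; exact hint)
  rw [huIcc] at h
  have h2 : ContinuousWithinAt (fun x => ∫ s in ρ..x, G s) (Set.Icc ρ (b+1)) b :=
    h b ⟨hb1, by linarith⟩
  refine h2.mono_of_mem_nhdsWithin ?_
  rw [show Set.Icc ρ (b+1) = Set.Ici ρ ∩ Set.Iic (b+1) from (Set.Ici_inter_Iic).symm]
  exact inter_mem_nhdsWithin _ (Iic_mem_nhds (by linarith))

private lemma aux_base_cont {ρ L σ : ℝ} (hρ : 1 < ρ) :
    ContinuousOn (fun s : ℝ => s * (L * s ^ (-2:ℝ) * Real.log s ^ (-σ))) (Set.Ici ρ) := by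
  have h0 : ∀ s ∈ Set.Ici ρ, s ≠ (0:ℝ) := fun s hs => by
    have : (1:ℝ) < s := lt_of_lt_of_le hρ hs
    intro h; rw [h] at this; linarith
  have hlog : ∀ s ∈ Set.Ici ρ, Real.log s ≠ 0 := fun s hs =>
    ne_of_gt (Real.log_pos (lt_of_lt_of_le hρ hs))
  exact continuousOn_id.mul
    ((continuousOn_const.mul (continuousOn_id.rpow_const (fun s hs => Or.inl (h0 s hs)))).mul
      ((continuousOn_id.log h0).rpow_const (fun s hs => Or.inl (hlog s hs))))

private lemma aux_integrand_nonneg {ρ L σ γ : ℝ} (hρ : 1 < ρ) (hL : 0 ≤ L) {f : ℝ → ℝ}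
    (hf0 : ∀ s ∈ Set.Ici ρ, 0 ≤ f s) {n : ℕ} {r s : ℝ}
    (hs : s ∈ Set.Icc ρ r) :
    0 ≤ s * (L * s ^ (-2:ℝ) * Real.log s ^ (-σ)) * (1 - (s/r)^n) * f s ^ γ := by
  obtain ⟨hs1, hs2⟩ := hs
  have hs0 : 0 < s := by linarith
  have hr0 : 0 < r := lt_of_lt_of_le hs0 hs2
  have h1 : (s/r)^n ≤ 1 := pow_le_one₀ (div_nonneg hs0.le hr0.le) (div_le_one_of_le₀ hs2 hr0.le)
  have h2 : (0:ℝ) ≤ Real.log s ^ (-σ) :=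
    Real.rpow_nonneg (Real.log_nonneg (by linarith)) _
  have h3 : (0:ℝ) ≤ f s ^ γ := Real.rpow_nonneg (hf0 s hs1) _
  have h4 : (0:ℝ) ≤ s ^ (-2:ℝ) := (Real.rpow_pos_of_pos hs0 _).le
  have h5 : (0:ℝ) ≤ 1 - (s/r)^n := by linarith
  exact mul_nonneg (mul_nonneg (mul_nonneg hs0.le (mul_nonneg (mul_nonneg hL h4) h2)) h5) h3

private lemma aux_op {N : ℕ} (hN : 3 ≤ N) {ρ L σ γ : ℝ} (hρ : 1 < ρ) (hL : 0 < L)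
    (hγ : 0 ≤ γ) {f : ℝ → ℝ} (hf : ContinuousOn f (Set.Ici ρ))
    (hf0 : ∀ s ∈ Set.Ici ρ, 0 ≤ f s) :
    ContinuousOn (fun r => (1/((N:ℝ)-2)) * ∫ s in ρ..r,
        s * (L * s ^ (-2:ℝ) * Real.log s ^ (-σ)) * (1 - (s/r)^(N-2)) * f s ^ γ) (Set.Ici ρ)
    ∧ ∀ r ∈ Set.Ici ρ, 0 ≤ (1/((N:ℝ)-2)) * ∫ s in ρ..r,
        s * (L * s ^ (-2:ℝ) * Real.log s ^ (-σ)) * (1 - (s/r)^(N-2)) * f s ^ γ := by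
  have hN2 : (0:ℝ) < (N:ℝ) - 2 := by
    have : (3:ℝ) ≤ (N:ℝ) := by exact_mod_cast hN
    linarith
  have hc0 : (0:ℝ) < 1/((N:ℝ)-2) := by positivity
  have hfγ : ContinuousOn (fun s => f s ^ γ) (Set.Ici ρ) :=
    hf.rpow_const (fun s _ => Or.inr hγ)
  have hG : ContinuousOn
      (fun s => s * (L * s ^ (-2:ℝ) * Real.log s ^ (-σ)) * f s ^ γ) (Set.Ici ρ) :=
    (aux_base_cont hρ).mul hfγ
  have hGn : ContinuousOn
      (fun s => s * (L * s ^ (-2:ℝ) * Real.log s ^ (-σ)) * f s ^ γ * s ^ (N-2))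
      (Set.Ici ρ) := hG.mul (continuous_pow (N-2)).continuousOn
  constructor
  · have key : ∀ r ∈ Set.Ici ρ,
        (∫ s in ρ..r, s * (L * s ^ (-2:ℝ) * Real.log s ^ (-σ)) * (1 - (s/r)^(N-2)) * f s ^ γ)
        = (∫ s in ρ..r, s * (L * s ^ (-2:ℝ) * Real.log s ^ (-σ)) * f s ^ γ)
          - (∫ s in ρ..r, s * (L * s ^ (-2:ℝ) * Real.log s ^ (-σ)) * f s ^ γ * s^(N-2))
            * ((r:ℝ)^(N-2))⁻¹ := by
      intro r hr
      have hρr : ρ ≤ r := hr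
      have hsub : Set.uIcc ρ r ⊆ Set.Ici ρ := by
        rw [Set.uIcc_of_le hρr]; exact Set.Icc_subset_Ici_self
      have hr0 : (0:ℝ) < r := by linarith [hρ, hρr]
      have hrn : ((r:ℝ)^(N-2)) ≠ 0 := pow_ne_zero _ (ne_of_gt hr0)
      have i1 : IntervalIntegrable
          (fun s => s * (L * s ^ (-2:ℝ) * Real.log s ^ (-σ)) * f s ^ γ) volume ρ r :=
        (hG.mono hsub).intervalIntegrable
      have i2 : IntervalIntegrable
          (fun s => s * (L * s ^ (-2:ℝ) * Real.log s ^ (-σ)) * f s ^ γ * s^(N-2)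
            * ((r:ℝ)^(N-2))⁻¹) volume ρ r :=
        ((hGn.mono hsub).intervalIntegrable).mul_const _
      have hpt : ∀ s : ℝ, s * (L * s ^ (-2:ℝ) * Real.log s ^ (-σ)) * (1 - (s/r)^(N-2)) * f s ^ γ
          = s * (L * s ^ (-2:ℝ) * Real.log s ^ (-σ)) * f s ^ γ
            - s * (L * s ^ (-2:ℝ) * Real.log s ^ (-σ)) * f s ^ γ * s^(N-2)
              * ((r:ℝ)^(N-2))⁻¹ := by
        intro s
        rw [div_pow]
        field_simp
      simp_rw [hpt]
      rw [intervalIntegral.integral_sub i1 i2, intervalIntegral.integral_mul_const]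
    have hcont : ContinuousOn (fun r => (1/((N:ℝ)-2)) *
        ((∫ s in ρ..r, s * (L * s ^ (-2:ℝ) * Real.log s ^ (-σ)) * f s ^ γ)
          - (∫ s in ρ..r, s * (L * s ^ (-2:ℝ) * Real.log s ^ (-σ)) * f s ^ γ * s^(N-2))
            * ((r:ℝ)^(N-2))⁻¹)) (Set.Ici ρ) := by
      refine continuousOn_const.mul (ContinuousOn.sub (aux_contOn_primitive hG) ?_)
      refine (aux_contOn_primitive hGn).mul (ContinuousOn.inv₀ (continuous_pow _).continuousOn ?_)
      intro r hr
      exact pow_ne_zero _ (by have := lt_of_lt_of_le hρ hr; intro h; rw [h] at this; linarith)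
    refine ContinuousOn.congr hcont (fun r hr => ?_)
    exact congrArg (fun t => (1/((N:ℝ)-2)) * t) (key r hr)
  · intro r hr
    refine mul_nonneg hc0.le (intervalIntegral.integral_nonneg hr ?_)
    intro s hs
    exact aux_integrand_nonneg hρ hL.le hf0 hs

private lemma aux_ftc {b x θ : ℝ} (hb : 1 < b) (hbx : b ≤ x) (hθ : θ + 1 ≠ 0) :
    ∫ s in b..x, s⁻¹ * Real.log s ^ θ
      = (Real.log x ^ (θ+1) - Real.log b ^ (θ+1)) / (θ+1) := by
  have key : ∀ s ∈ Set.uIcc b x,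
      HasDerivAt (fun t => Real.log t ^ (θ+1) / (θ+1)) (s⁻¹ * Real.log s ^ θ) s := by
    intro s hs
    rw [Set.uIcc_of_le hbx] at hs
    have hs1 : 1 < s := lt_of_lt_of_le hb hs.1
    have hlog : Real.log s ≠ 0 := ne_of_gt (Real.log_pos hs1)
    have h1 : HasDerivAt Real.log s⁻¹ s := Real.hasDerivAt_log (by linarith)
    have h2 : HasDerivAt (fun y : ℝ => y ^ (θ+1)) ((θ+1) * Real.log s ^ (θ+1-1)) (Real.log s) :=
      Real.hasDerivAt_rpow_const (Or.inl hlog)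
    have h3 := (h2.comp s h1).div_const (θ+1)
    refine h3.congr_deriv ?_
    rw [show θ + 1 - 1 = θ from by ring]
    field_simp
  rw [intervalIntegral.integral_eq_sub_of_hasDerivAt key ?_]
  · ring
  · apply ContinuousOn.intervalIntegrable
    rw [Set.uIcc_of_le hbx]
    have h0 : ∀ s ∈ Set.Icc b x, s ≠ (0:ℝ) := fun s hs => by
      have := lt_of_lt_of_le hb hs.1
      intro h; rw [h] at this; linarith
    exact (continuousOn_id.inv₀ h0).mul ((continuousOn_id.log h0).rpow_const
      (fun s hs => Or.inl (ne_of_gt (Real.log_pos (lt_of_lt_of_le hb hs.1)))))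

private lemma aux_op_lower {N : ℕ} (hN : 3 ≤ N) {ρ L σ γ a c r0 : ℝ}
    (hρ : 1 < ρ) (hL : 0 < L) (hγ : 1 ≤ γ) (hc : 0 < c) (hr0 : ρ < r0)
    (hθ : -1 < a * γ - σ)
    {f : ℝ → ℝ} (hf : ContinuousOn f (Set.Ici ρ)) (hf0 : ∀ s ∈ Set.Ici ρ, 0 ≤ f s)
    (hlow : ∀ s > r0, c * Real.log s ^ a ≤ f s) :
    ∃ C > (0:ℝ), ∃ r1 > ρ, ∀ r > r1,
      C * Real.log r ^ (a*γ + 1 - σ) ≤ (1/((N:ℝ)-2)) * ∫ s in ρ..r,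
        s * (L * s ^ (-2:ℝ) * Real.log s ^ (-σ)) * (1 - (s/r)^(N-2)) * f s ^ γ := by
  have hN2 : (0:ℝ) < (N:ℝ) - 2 := by
    have : (3:ℝ) ≤ (N:ℝ) := by exact_mod_cast hN
    linarith
  have hNn : N - 2 ≠ 0 := by omega
  have hc0 : (0:ℝ) < 1/((N:ℝ)-2) := by positivity
  have hγ0 : (0:ℝ) ≤ γ := by linarith
  set θ := a * γ - σ with hθdef
  have hθ1 : (0:ℝ) < θ + 1 := by linarith
  set b := r0 + 1 with hbdef
  have hb1 : (1:ℝ) < b := by simp only [hbdef]; linarith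
  have hbρ : ρ < b := by simp only [hbdef]; linarith
  have hbr0 : r0 < b := by simp only [hbdef]; linarith
  set K := L * c ^ γ / 2 with hKdef
  have hK : 0 < K := by
    have := Real.rpow_pos_of_pos hc γ
    simp only [hKdef]; positivity
  set E := ((1:ℝ)/2) ^ (θ+1) with hEdef
  have hE : 0 < E := Real.rpow_pos_of_pos (by norm_num) _
  refine ⟨(1/((N:ℝ)-2)) * K / (θ+1) * (E/2), by positivity, ?_⟩
  -- eventual bound
  have htend : Tendsto (fun r : ℝ => (E/2) * Real.log r ^ (θ+1)) atTop atTop := by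
    refine Tendsto.const_mul_atTop (by positivity) ?_
    exact (tendsto_rpow_atTop hθ1).comp Real.tendsto_log_atTop
  obtain ⟨M, hM⟩ := Filter.eventually_atTop.mp
    (htend.eventually_ge_atTop (Real.log b ^ (θ+1)))
  refine ⟨max (max (2*b) 4) M, lt_of_lt_of_le (by linarith) (le_trans (le_max_left _ _) (le_max_left _ _)), ?_⟩
  intro r hr
  have hr2b : 2*b < r := lt_of_le_of_lt (le_trans (le_max_left _ _) (le_max_left _ _)) hr
  have hr4 : (4:ℝ) < r := lt_of_le_of_lt (le_trans (le_max_right _ _) (le_max_left _ _)) hr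
  have hrM : M ≤ r := le_of_lt (lt_of_le_of_lt (le_max_right _ _) hr)
  have hbh : b < r/2 := by linarith
  have hρr : ρ ≤ r := by linarith
  have hr0' : (0:ℝ) < r := by linarith
  have hlogr : (0:ℝ) < Real.log r := Real.log_pos (by linarith)
  -- integrand facts
  have hFc : ContinuousOn (fun s =>
      s * (L * s ^ (-2:ℝ) * Real.log s ^ (-σ)) * (1 - (s/r)^(N-2)) * f s ^ γ)
      (Set.Ici ρ) := by
    refine (((aux_base_cont hρ).mul
      (continuousOn_const.sub ((continuousOn_id.div_const r).pow (N-2)))).mul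
      (hf.rpow_const (fun s _ => Or.inr hγ0)))
  have hiF : ∀ x y : ℝ, ρ ≤ x → x ≤ y → y ≤ r → IntervalIntegrable
      (fun s => s * (L * s ^ (-2:ℝ) * Real.log s ^ (-σ)) * (1 - (s/r)^(N-2)) * f s ^ γ)
      volume x y := by
    intro x y hx hxy hy
    refine (hFc.mono ?_).intervalIntegrable
    rw [Set.uIcc_of_le hxy]
    exact fun t ht => le_trans hx ht.1
  have hFnn : ∀ s ∈ Set.Icc ρ r,
      0 ≤ s * (L * s ^ (-2:ℝ) * Real.log s ^ (-σ)) * (1 - (s/r)^(N-2)) * f s ^ γ :=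
    fun s hs => aux_integrand_nonneg hρ hL.le hf0 hs
  -- pointwise lower bound on [b, r/2]
  have hpt : ∀ s ∈ Set.Icc b (r/2), K * (s⁻¹ * Real.log s ^ θ)
      ≤ s * (L * s ^ (-2:ℝ) * Real.log s ^ (-σ)) * (1 - (s/r)^(N-2)) * f s ^ γ := by
    intro s hs
    obtain ⟨hsb, hsr2⟩ := hs
    have hs1 : 1 < s := lt_of_lt_of_le hb1 hsb
    have hs0 : 0 < s := by linarith
    have hslog : 0 < Real.log s := Real.log_pos hs1
    have hq : (s/r)^(N-2) ≤ 1/2 := by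
      have h1 : s/r ≤ 1/2 := by rw [div_le_div_iff₀ hr0' (by norm_num)]; linarith
      have h2 : (s/r)^(N-2) ≤ s/r :=
        pow_le_of_le_one (div_nonneg hs0.le hr0'.le) (by rw [div_le_one hr0']; linarith) hNn
      linarith
    have hfs : c ^ γ * Real.log s ^ (a*γ) ≤ f s ^ γ := by
      have h1 : c * Real.log s ^ a ≤ f s := hlow s (lt_of_lt_of_le hbr0 hsb)
      have h2 : (c * Real.log s ^ a) ^ γ ≤ f s ^ γ :=
        Real.rpow_le_rpow (by positivity) h1 hγ0
      calc c ^ γ * Real.log s ^ (a*γ)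
          = c ^ γ * (Real.log s ^ a) ^ γ := by rw [Real.rpow_mul hslog.le]
        _ = (c * Real.log s ^ a) ^ γ :=
            (Real.mul_rpow hc.le (Real.rpow_nonneg hslog.le _)).symm
        _ ≤ f s ^ γ := h2
    have hss : s * s ^ (-2:ℝ) = s⁻¹ := by
      nth_rewrite 1 [← Real.rpow_one s]
      rw [← Real.rpow_add hs0, show (1:ℝ) + -2 = -1 from by norm_num, Real.rpow_neg_one]
    have hmerge : Real.log s ^ θ = Real.log s ^ (a*γ) * Real.log s ^ (-σ) := by
      rw [← Real.rpow_add hslog, hθdef]; ring_nf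
    have hA : (0:ℝ) ≤ L * s⁻¹ * Real.log s ^ (-σ) := by positivity
    have hmid : (1/2 : ℝ) * (c ^ γ * Real.log s ^ (a*γ))
        ≤ (1 - (s/r)^(N-2)) * f s ^ γ := by
      have hB : (0:ℝ) ≤ c ^ γ * Real.log s ^ (a*γ) := by positivity
      exact mul_le_mul (by linarith) hfs hB (by linarith)
    calc K * (s⁻¹ * Real.log s ^ θ)
        = (L * s⁻¹ * Real.log s ^ (-σ)) * ((1/2) * (c ^ γ * Real.log s ^ (a*γ))) := by
          rw [hmerge, hKdef]; ring
      _ ≤ (L * s⁻¹ * Real.log s ^ (-σ)) * ((1 - (s/r)^(N-2)) * f s ^ γ) :=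
          mul_le_mul_of_nonneg_left hmid hA
      _ = s * (L * s ^ (-2:ℝ) * Real.log s ^ (-σ)) * (1 - (s/r)^(N-2)) * f s ^ γ := by
          rw [← hss]; ring
  -- integral comparisons
  have hIg : IntervalIntegrable (fun s => K * (s⁻¹ * Real.log s ^ θ)) volume b (r/2) := by
    apply ContinuousOn.intervalIntegrable
    rw [Set.uIcc_of_le hbh.le]
    have h0 : ∀ s ∈ Set.Icc b (r/2), s ≠ (0:ℝ) := fun s hs => by
      have := lt_of_lt_of_le hb1 hs.1
      intro h; rw [h] at this; linarith
    exact continuousOn_const.mul ((continuousOn_id.inv₀ h0).mul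
      ((continuousOn_id.log h0).rpow_const
        (fun s hs => Or.inl (ne_of_gt (Real.log_pos (lt_of_lt_of_le hb1 hs.1))))))
  have hI2J : K * ∫ s in b..(r/2), s⁻¹ * Real.log s ^ θ
      ≤ ∫ s in b..(r/2), s * (L * s ^ (-2:ℝ) * Real.log s ^ (-σ)) * (1 - (s/r)^(N-2)) * f s ^ γ := by
    rw [← intervalIntegral.integral_const_mul]
    exact intervalIntegral.integral_mono_on hbh.le hIg
      (hiF b (r/2) hbρ.le hbh.le (by linarith)) hpt
  have hJ : ∫ s in b..(r/2), s⁻¹ * Real.log s ^ θ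
      = (Real.log (r/2) ^ (θ+1) - Real.log b ^ (θ+1)) / (θ+1) :=
    aux_ftc hb1 hbh.le (ne_of_gt hθ1)
  have hI12 : (∫ s in b..(r/2), s * (L * s ^ (-2:ℝ) * Real.log s ^ (-σ)) * (1 - (s/r)^(N-2)) * f s ^ γ)
      ≤ ∫ s in ρ..r, s * (L * s ^ (-2:ℝ) * Real.log s ^ (-σ)) * (1 - (s/r)^(N-2)) * f s ^ γ := by
    have e1 := intervalIntegral.integral_add_adjacent_intervals
      (hiF ρ b le_rfl (by linarith) (by linarith))
      (hiF b (r/2) hbρ.le hbh.le (by linarith))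
    have e2 := intervalIntegral.integral_add_adjacent_intervals
      (hiF ρ (r/2) le_rfl (by linarith) (by linarith))
      (hiF (r/2) r (by linarith) (by linarith) le_rfl)
    have n1 : 0 ≤ ∫ s in ρ..b, s * (L * s ^ (-2:ℝ) * Real.log s ^ (-σ)) * (1 - (s/r)^(N-2)) * f s ^ γ :=
      intervalIntegral.integral_nonneg hbρ.le
        (fun t ht => hFnn t ⟨ht.1, by linarith [ht.2]⟩)
    have n2 : 0 ≤ ∫ s in (r/2)..r, s * (L * s ^ (-2:ℝ) * Real.log s ^ (-σ)) * (1 - (s/r)^(N-2)) * f s ^ γ :=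
      intervalIntegral.integral_nonneg (by linarith)
        (fun t ht => hFnn t ⟨by linarith [ht.1], ht.2⟩)
    linarith
  -- log bounds
  have hlr2 : (1/2 : ℝ) * Real.log r ≤ Real.log (r/2) := by
    rw [Real.log_div (by linarith) (by norm_num)]
    have h4 : Real.log 4 ≤ Real.log r := Real.log_le_log (by norm_num) (by linarith)
    have h42 : Real.log 4 = 2 * Real.log 2 := by
      rw [show (4:ℝ) = 2^2 from by norm_num, Real.log_pow]
      push_cast; ring
    linarith
  have hEbound : E * Real.log r ^ (θ+1) ≤ Real.log (r/2) ^ (θ+1) := by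
    have h1 : ((1/2 : ℝ) * Real.log r) ^ (θ+1) ≤ Real.log (r/2) ^ (θ+1) :=
      Real.rpow_le_rpow (by positivity) hlr2 hθ1.le
    rwa [Real.mul_rpow (by norm_num) hlogr.le, ← hEdef] at h1
  have hMb : Real.log b ^ (θ+1) ≤ (E/2) * Real.log r ^ (θ+1) := hM r hrM
  have hexp : a*γ + 1 - σ = θ + 1 := by rw [hθdef]; ring
  rw [hexp]
  calc (1/((N:ℝ)-2)) * K / (θ+1) * (E/2) * Real.log r ^ (θ+1)
      = (1/((N:ℝ)-2)) * (K / (θ+1) * (E * Real.log r ^ (θ+1) - (E/2) * Real.log r ^ (θ+1))) := by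
        ring
    _ ≤ (1/((N:ℝ)-2)) * (K / (θ+1) * (Real.log (r/2) ^ (θ+1) - Real.log b ^ (θ+1))) := by
        refine mul_le_mul_of_nonneg_left (mul_le_mul_of_nonneg_left ?_ (by positivity)) hc0.le
        linarith
    _ = (1/((N:ℝ)-2)) * (K * ∫ s in b..(r/2), s⁻¹ * Real.log s ^ θ) := by
        rw [hJ]; ring
    _ ≤ (1/((N:ℝ)-2)) * ∫ s in b..(r/2),
          s * (L * s ^ (-2:ℝ) * Real.log s ^ (-σ)) * (1 - (s/r)^(N-2)) * f s ^ γ :=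
        mul_le_mul_of_nonneg_left hI2J hc0.le
    _ ≤ (1/((N:ℝ)-2)) * ∫ s in ρ..r,
          s * (L * s ^ (-2:ℝ) * Real.log s ^ (-σ)) * (1 - (s/r)^(N-2)) * f s ^ γ :=
        mul_le_mul_of_nonneg_left hI12 hc0.le

theorem stmt_19 (N : ℕ) (hN : 3 ≤ N) (α β : ℝ) (hα : 1 ≤ α) (hβ : 1 ≤ β) (hαβ : 1 < α * β)
    (ν ξ : ℝ) (hν : ν < 1) (hcond : 1 - ξ + β * (1 - ν) > 0)
    (ρ L₁ L₂ : ℝ) (hρ : 1 < ρ) (hL₁ : 0 < L₁) (hL₂ : 0 < L₂)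
    (u v : ℕ → ℝ → ℝ)
    (hu0 : ∀ r, u 0 r = 1) (hv0 : ∀ r, v 0 r = 1)
    (huk : ∀ k, ∀ r, u (k + 1) r =
      (1 / ((N : ℝ) - 2)) * ∫ s in ρ..r,
        s * (L₁ * s ^ (-2 : ℝ) * Real.log s ^ (-ν)) * (1 - (s / r) ^ (N - 2)) * v k s ^ α)
    (hvk : ∀ k, ∀ r, v (k + 1) r =
      (1 / ((N : ℝ) - 2)) * ∫ s in ρ..r,
        s * (L₂ * s ^ (-2 : ℝ) * Real.log s ^ (-ξ)) * (1 - (s / r) ^ (N - 2)) * u k s ^ β) :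
    ∀ k : ℕ, ∃ C > (0 : ℝ), ∃ rk > ρ, ∀ r > rk,
      v (2 * k) r ≥
        C * Real.log r ^ ((α ^ k * β ^ k - 1) * (1 - ξ + β * (1 - ν)) / (α * β - 1)) := by
  have hα0 : (0:ℝ) ≤ α := by linarith
  have hβ0 : (0:ℝ) ≤ β := by linarith
  -- regularity of u k, v k
  have hreg : ∀ k, (ContinuousOn (u k) (Set.Ici ρ) ∧ ∀ s ∈ Set.Ici ρ, 0 ≤ u k s) ∧
      (ContinuousOn (v k) (Set.Ici ρ) ∧ ∀ s ∈ Set.Ici ρ, 0 ≤ v k s) := by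
    intro k
    induction k with
    | zero =>
      refine ⟨⟨continuousOn_const.congr (fun r _ => hu0 r), fun s _ => by rw [hu0]; norm_num⟩,
        ⟨continuousOn_const.congr (fun r _ => hv0 r), fun s _ => by rw [hv0]; norm_num⟩⟩
    | succ k ih =>
      have hU : u (k+1) = fun r => (1 / ((N : ℝ) - 2)) * ∫ s in ρ..r,
          s * (L₁ * s ^ (-2 : ℝ) * Real.log s ^ (-ν)) * (1 - (s / r) ^ (N - 2)) * v k s ^ α :=
        funext (huk k)
      have hV : v (k+1) = fun r => (1 / ((N : ℝ) - 2)) * ∫ s in ρ..r,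
          s * (L₂ * s ^ (-2 : ℝ) * Real.log s ^ (-ξ)) * (1 - (s / r) ^ (N - 2)) * u k s ^ β :=
        funext (hvk k)
      rw [hU, hV]
      exact ⟨aux_op hN hρ hL₁ hα0 ih.2.1 ih.2.2, aux_op hN hρ hL₂ hβ0 ih.1.1 ih.1.2⟩
  intro k
  induction k with
  | zero =>
    refine ⟨1, one_pos, ρ+1, by linarith, fun r hr => ?_⟩
    have h0 : (α^(0:ℕ)*β^(0:ℕ) - 1)*(1-ξ+β*(1-ν))/(α*β-1) = 0 := by norm_num
    rw [show (2*0 : ℕ) = 0 from rfl, hv0 r, h0, Real.rpow_zero, mul_one]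
  | succ k ih =>
    obtain ⟨C, hC, rk, hrk, hvlow⟩ := ih
    have hek0 : 0 ≤ (α^k*β^k - 1)*(1-ξ+β*(1-ν))/(α*β-1) := by
      have h1 : (1:ℝ) ≤ α^k*β^k := by
        rw [← mul_pow]; exact one_le_pow₀ hαβ.le
      exact div_nonneg (mul_nonneg (by linarith) hcond.le) (by linarith)
    have step1 := aux_op_lower hN hρ hL₁ hα hC hrk
      (show -1 < ((α^k*β^k - 1)*(1-ξ+β*(1-ν))/(α*β-1)) * α - ν from by
        nlinarith [mul_nonneg hek0 hα0])
      (hreg (2*k)).2.1 (hreg (2*k)).2.2 (fun s hs => hvlow s hs)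
    obtain ⟨C₁, hC₁, r₁, hr₁, hu1⟩ := step1
    have hu1' : ∀ s > r₁, C₁ * Real.log s ^
        (((α^k*β^k - 1)*(1-ξ+β*(1-ν))/(α*β-1)) * α + 1 - ν) ≤ u (2*k+1) s := by
      intro s hs
      rw [huk (2*k) s]
      exact hu1 s hs
    have step2 := aux_op_lower hN hρ hL₂ hβ hC₁ hr₁
      (show -1 < (((α^k*β^k - 1)*(1-ξ+β*(1-ν))/(α*β-1)) * α + 1 - ν) * β - ξ from by
        nlinarith [mul_nonneg (mul_nonneg hek0 hα0) hβ0])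
      (hreg (2*k+1)).1.1 (hreg (2*k+1)).1.2 hu1'
    obtain ⟨C₂, hC₂, r₂, hr₂, hv2⟩ := step2
    refine ⟨C₂, hC₂, r₂, hr₂, fun r hr => ?_⟩
    have hfin := hv2 r hr
    have hexp : (((α^k*β^k - 1)*(1-ξ+β*(1-ν))/(α*β-1)) * α + 1 - ν) * β + 1 - ξ
        = (α^(k+1)*β^(k+1) - 1)*(1-ξ+β*(1-ν))/(α*β-1) := by
      have hne : α*β - 1 ≠ 0 := by linarith
      have hD : (α^k*β^k - 1)*(1-ξ+β*(1-ν))/(α*β-1) * (α*β-1) = (α^k*β^k - 1)*(1-ξ+β*(1-ν)) :=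
        div_mul_cancel₀ _ hne
      rw [eq_div_iff hne]
      linear_combination (α*β)*hD
    rw [show 2*(k+1) = (2*k+1)+1 from by ring, hvk (2*k+1) r, ← hexp]
    exact hfin
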